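/- Let (X,T) and (Y,S) be minimal Cantor systems which are strongly orbit equivalent: there exist a homeomorphism φ : X → Y and functions n : X → ℤ, m : X → ℤ, each continuous except at most at one point of X (with ℤ given the discrete topology), such that φ(Tx) = S^{n(x)}(φ(x)) and φ(T^{m(x)}x) = S(φ(x)) for all x ∈ X. Then (X,T) and (Y,S) have the same rational additive continuous eigenvalues: E(X,T) ∩ ℚ = E(Y,S) ∩ ℚ. -/

import Mathlib

open scoped Classical

namespace Stmt6

noncomputable section

variable {Y : Type*} [TopologicalSpace Y]

/-- `ZMod b`-valued indicator of a set. -/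
def ind (b : ℕ) (A : Set Y) : Y → ZMod b := fun y => if y ∈ A then 1 else 0

lemma ind_lc {b : ℕ} {A : Set Y} (hA : IsClopen A) : IsLocallyConstant (ind b A) := by
  rw [IsLocallyConstant.iff_isOpen_fiber]
  intro v
  by_cases h1 : (1 : ZMod b) = v <;> by_cases h0 : (0 : ZMod b) = v
  · convert isOpen_univ
    ext y; by_cases hy : y ∈ A <;> simp [ind, hy, h1, h0]
  · convert hA.isOpen
    ext y; by_cases hy : y ∈ A <;> simp [ind, hy, h1, h0]
  · convert hA.compl.isOpen
    ext y; by_cases hy : y ∈ A <;> simp [ind, hy, h1, h0]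
  · convert isOpen_empty
    ext y; by_cases hy : y ∈ A <;> simp [ind, hy, h1, h0]

variable (S : Y ≃ₜ Y) (b : ℕ)

/-- `u` is an `S`-coboundary with locally constant transfer. -/
def Cob (u : Y → ZMod b) : Prop :=
  ∃ w : Y → ZMod b, IsLocallyConstant w ∧ ∀ y, w (S y) - w y = u y

variable {S b}

lemma Cob.congr {u v : Y → ZMod b} (hu : Cob S b u) (h : ∀ y, u y = v y) : Cob S b v := by
  obtain ⟨w, hw, hw2⟩ := hu
  exact ⟨w, hw, fun y => (hw2 y).trans (h y)⟩

lemma Cob.add {u v : Y → ZMod b} (hu : Cob S b u) (hv : Cob S b v) :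
    Cob S b (fun y => u y + v y) := by
  obtain ⟨w, hw, hw2⟩ := hu
  obtain ⟨w', hw', hw2'⟩ := hv
  refine ⟨fun y => w y + w' y, hw.add hw', fun y => ?_⟩
  dsimp only; rw [← hw2 y, ← hw2' y]; ring

lemma Cob.neg {u : Y → ZMod b} (hu : Cob S b u) : Cob S b (fun y => -(u y)) := by
  obtain ⟨w, hw, hw2⟩ := hu
  refine ⟨fun y => -(w y), hw.neg, fun y => ?_⟩
  dsimp only; rw [← hw2 y]; ring

lemma Cob.zero : Cob S b (fun _ => 0) :=
  ⟨fun _ => 0, IsLocallyConstant.const 0, fun _ => by ring⟩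

lemma Cob.smul (j : ZMod b) {u : Y → ZMod b} (hu : Cob S b u) :
    Cob S b (fun y => j * u y) := by
  obtain ⟨w, hw, hw2⟩ := hu
  refine ⟨fun y => j * w y, (IsLocallyConstant.const j).mul hw, fun y => ?_⟩
  dsimp only; rw [← hw2 y]; ring

lemma Cob.sum {ι : Type*} (C : Finset ι) {u : ι → Y → ZMod b}
    (h : ∀ c ∈ C, Cob S b (u c)) : Cob S b (fun y => ∑ c ∈ C, u c y) := by
  classical
  induction C using Finset.induction_on with
  | empty => exact Cob.zero.congr (by simp)
  | insert a s hc ih =>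
    have := ((h a (Finset.mem_insert_self a s)).add
      (ih (fun c hcs => h c (Finset.mem_insert_of_mem hcs))))
    exact this.congr (fun y => by rw [Finset.sum_insert hc])

section ZP

variable {S : Y ≃ₜ Y} {b : ℕ}

/-- action of `S.toEquiv ^ c`. -/
def sp (S : Y ≃ₜ Y) (c : ℤ) : Y → Y := fun y => (S.toEquiv ^ c) y

lemma sp_zero (y : Y) : sp S 0 y = y := rfl

lemma sp_add_one (c : ℤ) (y : Y) : sp S (c + 1) y = S (sp S c y) := by
  show (S.toEquiv ^ (c + 1)) y = S.toEquiv ((S.toEquiv ^ c) y)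
  rw [add_comm, zpow_add, zpow_one]
  rfl

lemma sp_one (y : Y) : sp S 1 y = S y := by
  have := sp_add_one (S := S) 0 y
  rw [zero_add] at this
  rw [this, sp_zero]

lemma sp_sub_one (c : ℤ) (y : Y) : sp S (c - 1) y = sp S c (S.symm y) := by
  show (S.toEquiv ^ (c - 1)) y = (S.toEquiv ^ c) (S.toEquiv.symm y)
  have h : (S.toEquiv ^ (c - 1)) = (S.toEquiv ^ c * S.toEquiv ^ (-1 : ℤ)) := by
    rw [← zpow_add, sub_eq_add_neg]
  rw [h, Equiv.Perm.mul_apply]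
  congr 1

lemma sp_cont (c : ℤ) : Continuous (sp S c) := by
  induction c using Int.induction_on with
  | zero => exact continuous_id
  | succ i ih =>
    have : sp S (i + 1) = S ∘ sp S i := funext fun y => sp_add_one i y
    rw [this]; exact S.continuous.comp ih
  | pred i ih =>
    have : sp S (-i - 1) = sp S (-i) ∘ S.symm := funext fun y => sp_sub_one (-i) y
    rw [this]; exact ih.comp S.symm.continuous

lemma sp_symm_eq (c : ℤ) : (S.toEquiv ^ c).symm = S.toEquiv ^ (-c) := by
  rw [zpow_neg]; rfl

lemma sp_image_clopen (c : ℤ) {E : Set Y} (hE : IsClopen E) : IsClopen (sp S c '' E) := by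
  have h : sp S c '' E = sp S (-c) ⁻¹' E := by
    show (S.toEquiv ^ c) '' E = _
    rw [Equiv.image_eq_preimage_symm, sp_symm_eq]
    rfl
  rw [h]
  exact hE.preimage (sp_cont (-c))

end ZP

section Steps

variable {S : Y ≃ₜ Y} {b : ℕ}

lemma mem_image_S {E : Set Y} (y : Y) : S y ∈ (⇑S) '' E ↔ y ∈ E := by
  constructor
  · rintro ⟨e, he, hye⟩
    rwa [← S.injective hye]
  · exact fun he => ⟨y, he, rfl⟩

lemma cob_step {E : Set Y} (hE : IsClopen E) :
    Cob S b (fun y => ind b ((⇑S) '' E) y - ind b E y) := by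
  have himg : IsClopen ((⇑S) '' E) := by
    have : (⇑S) '' E = sp S 1 '' E := by
      apply Set.image_congr
      intro y _; exact (sp_one y).symm
    rw [this]; exact sp_image_clopen 1 hE
  refine ⟨fun y => -(ind b ((⇑S) '' E) y), (ind_lc himg).neg, fun y => ?_⟩
  dsimp only
  have h1 : ind b ((⇑S) '' E) (S y) = ind b E y := by
    unfold ind
    by_cases hy : y ∈ E
    · rw [if_pos ((mem_image_S y).2 hy), if_pos hy]
    · rw [if_neg (fun hc => hy ((mem_image_S y).1 hc)), if_neg hy]
  rw [h1]; ring

lemma cob_sp (c : ℤ) {E : Set Y} (hE : IsClopen E) :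
    Cob S b (fun y => ind b (sp S c '' E) y - ind b E y) := by
  induction c using Int.induction_on with
  | zero =>
    refine Cob.zero.congr (fun y => ?_)
    have : sp S 0 '' E = E := by
      rw [show sp S (0 : ℤ) = id from funext fun y => sp_zero y, Set.image_id]
    rw [this]; ring
  | succ i ih =>
    have key : sp S ((i : ℤ) + 1) '' E = (⇑S) '' (sp S i '' E) := by
      rw [← Set.image_comp]
      exact Set.image_congr fun y _ => sp_add_one i y
    have step := cob_step (S := S) (b := b) (sp_image_clopen (S := S) (i : ℤ) hE)
    refine (step.add ih).congr (fun y => ?_)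
    rw [key]; ring
  | pred i ih =>
    -- c = -i - 1; S '' (sp S (-i-1) '' E) = sp S (-i) '' E
    have key : (⇑S) '' (sp S (-(i : ℤ) - 1) '' E) = sp S (-(i : ℤ)) '' E := by
      rw [← Set.image_comp]
      apply Set.image_congr
      intro y _
      show S (sp S (-(i : ℤ) - 1) y) = sp S (-(i : ℤ)) y
      rw [← sp_add_one (-(i : ℤ) - 1) y, sub_add_cancel]
    have step := cob_step (S := S) (b := b) (sp_image_clopen (S := S) (-(i : ℤ) - 1) hE)
    refine (ih.add step.neg).congr (fun y => ?_)
    rw [key]; ring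

end Steps

section GPS

variable {S : Y ≃ₜ Y} {b : ℕ}

/-- Indicator of a finite disjoint union is the sum of indicators. -/
lemma ind_biUnion {ι : Type*} (C : Finset ι) (B : ι → Set Y)
    (hdisj : ∀ c ∈ C, ∀ c' ∈ C, c ≠ c' → ∀ y, y ∈ B c → y ∉ B c') (y : Y) :
    ind b (⋃ c ∈ C, B c) y = ∑ c ∈ C, ind b (B c) y := by
  by_cases hy : y ∈ ⋃ c ∈ C, B c
  · obtain ⟨c₀, hc₀, hyc₀⟩ := Set.mem_iUnion₂.1 hy
    rw [Finset.sum_eq_single_of_mem c₀ hc₀]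
    · unfold ind
      rw [if_pos hy, if_pos hyc₀]
    · intro c hc hne
      unfold ind
      rw [if_neg (hdisj c₀ hc₀ c hc (fun h => hne (h ▸ rfl)) y hyc₀)]
  · rw [Finset.sum_eq_zero, ind, if_neg hy]
    intro c hc
    unfold ind
    rw [if_neg (fun hyc => hy (Set.mem_iUnion₂.2 ⟨c, hc, hyc⟩))]

/-- GPS step: for a clopen set avoiding the discontinuity point. -/
lemma cob_R_of_cont [CompactSpace Y] {R : Y ≃ₜ Y} {h : Y → ℤ}
    (hR : ∀ y, R y = sp S (h y) y) {A : Set Y} (hA : IsClopen A)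
    (hcont : ∀ y ∈ A, ContinuousAt h y) :
    Cob S b (fun y => ind b ((⇑R) '' A) y - ind b A y) := by
  classical
  -- cover A by neighbourhoods where h is constant
  have hU : ∀ x ∈ A, {x' | h x' = h x} ∈ nhds x := by
    intro x hx
    have := (hcont x hx).preimage_mem_nhds
      (IsOpen.mem_nhds (isOpen_discrete ({h x} : Set ℤ)) rfl)
    exact this
  obtain ⟨t, htA, hcover⟩ := (hA.isClosed.isCompact).elim_nhds_subcover
    (fun x => {x' | h x' = h x}) hU
  set C : Finset ℤ := t.image h with hC
  set B : ℤ → Set Y := fun c => A ∩ h ⁻¹' {c} with hB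
  -- A is covered by the B c
  have hAcov : ∀ x ∈ A, h x ∈ C := by
    intro x hx
    obtain ⟨x₀, hx₀t, hxU⟩ := Set.mem_iUnion₂.1 (hcover hx)
    exact Finset.mem_image.2 ⟨x₀, hx₀t, by rw [← hxU]⟩
  have hAeq : A = ⋃ c ∈ C, B c := by
    ext x
    constructor
    · intro hx
      exact Set.mem_iUnion₂.2 ⟨h x, hAcov x hx, hx, rfl⟩
    · rintro hx
      obtain ⟨c, _, hxc, _⟩ := Set.mem_iUnion₂.1 hx
      exact hxc
  -- each B c is clopen
  have hBopen : ∀ c, IsOpen (B c) := by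
    intro c
    rw [isOpen_iff_mem_nhds]
    rintro x ⟨hxA, hxc⟩
    have h1 : {x' | h x' = h x} ∈ nhds x := hU x hxA
    have h2 : A ∈ nhds x := hA.isOpen.mem_nhds hxA
    filter_upwards [h1, h2] with x' hx1 hx2
    exact ⟨hx2, by rw [Set.mem_preimage, Set.mem_singleton_iff, hx1, ← hxc]⟩
  have hBdisj : ∀ c ∈ C, ∀ c' ∈ C, c ≠ c' → ∀ y, y ∈ B c → y ∉ B c' := by
    rintro c _ c' _ hne y ⟨_, hyc⟩ ⟨_, hyc'⟩
    exact hne (by rw [← hyc, ← hyc'])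
  have hBclosed : ∀ c ∈ C, IsClosed (B c) := by
    intro c hc
    have : B c = A \ ⋃ c' ∈ C.erase c, B c' := by
      ext x
      constructor
      · intro hx
        refine ⟨hx.1, fun hmem => ?_⟩
        obtain ⟨c', hc', hxc'⟩ := Set.mem_iUnion₂.1 hmem
        exact hBdisj c hc c' (Finset.mem_of_mem_erase hc')
          (fun h => (Finset.ne_of_mem_erase hc') h.symm) x hx hxc'
      · rintro ⟨hxA, hxn⟩
        refine ⟨hxA, ?_⟩
        have hxC := hAcov x hxA
        by_contra hne
        exact hxn (Set.mem_iUnion₂.2 ⟨h x, Finset.mem_erase.2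
          ⟨fun heq => hne (by rw [Set.mem_preimage, Set.mem_singleton_iff, heq]), hxC⟩, hxA, rfl⟩)
    rw [this]
    apply hA.isClosed.sdiff
    exact isOpen_biUnion (fun c' _ => hBopen c')
  have hBclopen : ∀ c ∈ C, IsClopen (B c) := fun c hc => ⟨hBclosed c hc, hBopen c⟩
  -- image decomposition
  have hIm : ∀ c, (⇑R) '' (B c) = sp S c '' (B c) := by
    intro c
    apply Set.image_congr
    rintro x ⟨hxA, hxc⟩
    have hcx : h x = c := Set.mem_singleton_iff.1 hxc
    rw [hR x, hcx]
  have hImA : (⇑R) '' A = ⋃ c ∈ C, sp S c '' (B c) := by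
    rw [hAeq, Set.image_iUnion₂]
    apply Set.iUnion₂_congr
    intro c hc
    exact hIm c
  have hImdisj : ∀ c ∈ C, ∀ c' ∈ C, c ≠ c' → ∀ y, y ∈ sp S c '' B c → y ∉ sp S c' '' B c' := by
    rintro c hc c' hc' hne y hyc hyc'
    rw [← hIm c] at hyc
    rw [← hIm c'] at hyc'
    obtain ⟨x, hx, hxy⟩ := hyc
    obtain ⟨x', hx', hxy'⟩ := hyc'
    have : x = x' := R.injective (hxy.trans hxy'.symm)
    exact hBdisj c hc c' hc' hne x hx (this ▸ hx')
  -- sum up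
  have hsum : ∀ c ∈ C, Cob S b (fun y => ind b (sp S c '' B c) y - ind b (B c) y) :=
    fun c hc => cob_sp c (hBclopen c hc)
  refine (Cob.sum C hsum).congr (fun y => ?_)
  rw [hImA, ind_biUnion C _ hImdisj y, hAeq, ind_biUnion C _ hBdisj y, Finset.sum_sub_distrib]

/-- GPS lemma: for every clopen `A`, `ind (R''A) - ind A` is an `S`-coboundary. -/
lemma cob_R [CompactSpace Y] {R : Y ≃ₜ Y} {h : Y → ℤ}
    (hR : ∀ y, R y = sp S (h y) y) {y₀ : Y}
    (hcont : ∀ y, y ≠ y₀ → ContinuousAt h y) {A : Set Y} (hA : IsClopen A) :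
    Cob S b (fun y => ind b ((⇑R) '' A) y - ind b A y) := by
  by_cases hy₀ : y₀ ∈ A
  · have hc := cob_R_of_cont (b := b) hR hA.compl
      (fun y hy => hcont y (fun he => hy (he ▸ hy₀)))
    have hcompl : (⇑R) '' Aᶜ = ((⇑R) '' A)ᶜ := Set.image_compl_eq R.bijective
    refine hc.neg.congr (fun y => ?_)
    rw [hcompl]
    have e1 : ∀ (B : Set Y) (y : Y), ind b Bᶜ y = 1 - ind b B y := by
      intro B y
      unfold ind
      by_cases hy : y ∈ B
      · rw [if_neg (show y ∉ Bᶜ from fun hc => hc hy), if_pos hy]; ring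
      · rw [if_pos (show y ∈ Bᶜ from hy), if_neg hy]; ring
    rw [e1, e1]
    ring
  · exact cob_R_of_cont hR hA (fun y hy => hcont y (fun he => hy₀ (he ▸ hy)))

lemma cob_R_preimage [CompactSpace Y] {R : Y ≃ₜ Y} {h : Y → ℤ}
    (hR : ∀ y, R y = sp S (h y) y) {y₀ : Y}
    (hcont : ∀ y, y ≠ y₀ → ContinuousAt h y) {B : Set Y} (hB : IsClopen B) :
    Cob S b (fun y => ind b ((⇑R) ⁻¹' B) y - ind b B y) := by
  have hpre : IsClopen ((⇑R) ⁻¹' B) := hB.preimage R.continuous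
  have himg : (⇑R) '' ((⇑R) ⁻¹' B) = B := Set.image_preimage_eq _ R.surjective
  have := (cob_R (b := b) hR hcont hpre).neg
  refine this.congr (fun y => ?_)
  rw [himg]
  ring

/-- Key transfer: for locally constant `τ`, `τ ∘ R - τ` is an `S`-coboundary. -/
lemma cob_comp_R [CompactSpace Y] [NeZero b] {R : Y ≃ₜ Y} {h : Y → ℤ}
    (hR : ∀ y, R y = sp S (h y) y) {y₀ : Y}
    (hcont : ∀ y, y ≠ y₀ → ContinuousAt h y) {τ : Y → ZMod b}
    (hτ : IsLocallyConstant τ) :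
    Cob S b (fun y => τ (R y) - τ y) := by
  classical
  have hfiber : ∀ j : ZMod b, IsClopen (τ ⁻¹' {j}) := by
    intro j
    exact hτ.isClopen_fiber j
  have hpick : ∀ (υ : Y → ZMod b) (y : Y),
      ∑ j : ZMod b, j * ind b (υ ⁻¹' {j}) y = υ y := by
    intro υ y
    rw [Finset.sum_eq_single (υ y)]
    · unfold ind
      rw [if_pos (by exact rfl)]
      ring
    · intro j _ hne
      unfold ind
      rw [if_neg (show y ∉ υ ⁻¹' {j} from fun hc => hne (Set.mem_singleton_iff.1 hc).symm)]
      ring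
    · intro hmem
      exact absurd (Finset.mem_univ _) hmem
  have hterm : ∀ j : ZMod b, Cob S b
      (fun y => j * (ind b ((⇑R) ⁻¹' (τ ⁻¹' {j})) y - ind b (τ ⁻¹' {j}) y)) :=
    fun j => (cob_R_preimage hR hcont (hfiber j)).smul j
  refine (Cob.sum Finset.univ (fun j _ => hterm j)).congr (fun y => ?_)
  have expand : ∀ j : ZMod b, j * (ind b ((⇑R) ⁻¹' (τ ⁻¹' {j})) y - ind b (τ ⁻¹' {j}) y)
      = j * ind b ((τ ∘ ⇑R) ⁻¹' {j}) y - j * ind b (τ ⁻¹' {j}) y := by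
    intro j
    rw [Set.preimage_comp]
    ring
  rw [Finset.sum_congr rfl (fun j _ => expand j), Finset.sum_sub_distrib,
    hpick (τ ∘ ⇑R) y, hpick τ y]
  rfl

end GPS

section Transfer

lemma transfer {X Y : Type*} [TopologicalSpace X] [Nonempty X]
    [TopologicalSpace Y] [CompactSpace Y]
    (T : X ≃ₜ X) (S : Y ≃ₜ Y)
    (hminT : ∀ x : X, Dense (Set.range fun k : ℤ => (T.toEquiv ^ k) x))
    (φ : X ≃ₜ Y) (n : X → ℤ) (pn : X)
    (hn : ∀ x : X, x ≠ pn → ContinuousAt n x)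
    (h1 : ∀ x : X, φ (T x) = (S.toEquiv ^ n x) (φ x)) (q : ℚ) :
    (∃ f : C(X, ℂ), f ≠ 0 ∧
        ∀ x : X, f (T x) = Complex.exp (2 * Real.pi * Complex.I * (q : ℝ)) * f x) →
    (∃ g : C(Y, ℂ), g ≠ 0 ∧
        ∀ y : Y, g (S y) = Complex.exp (2 * Real.pi * Complex.I * (q : ℝ)) * g y) := by
  rintro ⟨f, hf0, hf⟩
  set b : ℕ := q.den with hb
  haveI : NeZero b := ⟨q.den_nz⟩
  set lam : ℂ := Complex.exp (2 * Real.pi * Complex.I * (q : ℝ)) with hlam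
  set ζ : ℂ := Complex.exp (2 * Real.pi * Complex.I / b) with hζdef
  have hζprim : IsPrimitiveRoot ζ b := Complex.isPrimitiveRoot_exp b (NeZero.ne b)
  have hζne : ζ ≠ 0 := Complex.exp_ne_zero _
  have hlamne : lam ≠ 0 := Complex.exp_ne_zero _
  have hbC : (b : ℂ) ≠ 0 := by exact_mod_cast (NeZero.ne b)
  -- `lam = ζ ^ q.num`
  have hlamζ : lam = ζ ^ (q.num) := by
    rw [hlam, hζdef, ← Complex.exp_int_mul]
    congr 1
    have hq : ((q : ℝ) : ℂ) = (q.num : ℂ) / (b : ℂ) := by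
      rw [Complex.ofReal_ratCast, Rat.cast_def]
    rw [hq]
    field_simp
  have hlamb : lam ^ b = 1 := by
    rw [hlamζ, ← zpow_natCast (ζ ^ q.num), ← zpow_mul, mul_comm, zpow_mul, zpow_natCast,
      hζprim.pow_eq_one, one_zpow]
  -- orbit formula
  have horb : ∀ (k : ℤ) (x : X), f (sp T k x) = lam ^ k * f x := by
    intro k
    induction k using Int.induction_on with
    | zero => intro x; rw [sp_zero, zpow_zero, one_mul]
    | succ i ih =>
      intro x
      rw [sp_add_one, hf (sp T i x), ih x, zpow_add_one₀ hlamne]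
      ring
    | pred i ih =>
      intro x
      have hfs : f (T.symm x) = lam⁻¹ * f x := by
        have := hf (T.symm x)
        rw [T.apply_symm_apply] at this
        rw [this]
        field_simp
      rw [sp_sub_one, ih (T.symm x), hfs, zpow_sub_one₀ hlamne]
      ring
  -- f is nowhere zero
  have hfx : ∃ x₁, f x₁ ≠ 0 := by
    by_contra hc
    push_neg at hc
    exact hf0 (ContinuousMap.ext fun x => by rw [hc x, ContinuousMap.zero_apply])
  obtain ⟨x₁, hx₁⟩ := hfx
  have hnz : ∀ x, f x ≠ 0 := by
    intro x hx
    have hsub : (Set.range fun k : ℤ => (T.toEquiv ^ k) x) ⊆ (⇑f) ⁻¹' {0} := by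
      rintro _ ⟨k, rfl⟩
      have : f ((T.toEquiv ^ k) x) = 0 := by
        rw [show ((T.toEquiv ^ k) x) = sp T k x from rfl, horb k x, hx, mul_zero]
      exact this
    have hcl : IsClosed ((⇑f) ⁻¹' {0}) := isClosed_singleton.preimage f.continuous
    have hss := closure_minimal hsub hcl
    rw [(hminT x).closure_eq] at hss
    exact hx₁ (hss (Set.mem_univ x₁))
  -- f ^ b is constant
  have x₀ : X := Classical.arbitrary X
  have hconst : ∀ x, f x ^ b = f x₀ ^ b := by
    have hinv : ∀ (k : ℤ) (x : X), f (sp T k x) ^ b = f x ^ b := by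
      intro k x
      have h2 : (lam ^ k) ^ b = 1 := by
        rw [← zpow_natCast (lam ^ k), ← zpow_mul, mul_comm, zpow_mul, zpow_natCast, hlamb,
          one_zpow]
      rw [horb k x, mul_pow, h2, one_mul]
    intro x
    have hcl : IsClosed {x' : X | f x' ^ b = f x₀ ^ b} :=
      isClosed_eq (f.continuous.pow b) continuous_const
    have hsub : (Set.range fun k : ℤ => (T.toEquiv ^ k) x₀) ⊆ {x' : X | f x' ^ b = f x₀ ^ b} := by
      rintro _ ⟨k, rfl⟩
      exact hinv k x₀
    have hss := closure_minimal hsub hcl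
    rw [(hminT x₀).closure_eq] at hss
    exact hss (Set.mem_univ x)
  -- discrete logarithm
  have hroot : ∀ x, (f x / f x₀) ^ b = 1 := by
    intro x
    rw [div_pow, hconst x, div_self (pow_ne_zero b (hnz x₀))]
  have hex : ∀ x, ∃ i, i < b ∧ ζ ^ i = f x / f x₀ := by
    intro x
    obtain ⟨i, hi, hieq⟩ := hζprim.eq_pow_of_pow_eq_one (hroot x)
    exact ⟨i, hi, hieq⟩
  choose w hwlt hweq using hex
  -- exponent bridging
  have hzinj : ∀ u v : ℤ, ζ ^ u = ζ ^ v → ((u : ZMod b) = (v : ZMod b)) := by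
    intro u v huv
    have h1' : ζ ^ (u - v) = 1 := by
      rw [zpow_sub₀ hζne, huv, div_self (zpow_ne_zero v hζne)]
    have h2 : (b : ℤ) ∣ (u - v) := (hζprim.zpow_eq_one_iff_dvd _).1 h1'
    have h3 : ((u - v : ℤ) : ZMod b) = 0 := (ZMod.intCast_zmod_eq_zero_iff_dvd _ b).2 h2
    push_cast at h3
    exact sub_eq_zero.mp h3
  have hzred : ∀ u v : ℤ, ((u : ZMod b) = (v : ZMod b)) → ζ ^ u = ζ ^ v := by
    intro u v huv
    have h2 : (b : ℤ) ∣ (v - u) := Int.ModEq.dvd ((ZMod.intCast_eq_intCast_iff u v b).1 huv)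
    have h1' : ζ ^ (v - u) = 1 := (hζprim.zpow_eq_one_iff_dvd _).2 h2
    calc ζ ^ u = ζ ^ u * ζ ^ (v - u) := by rw [h1', mul_one]
    _ = ζ ^ v := by rw [← zpow_add₀ hζne]; congr 1; ring
  -- the ZMod b valued factor map
  set π : X → ZMod b := fun x => ((w x : ℕ) : ZMod b) with hπdef
  have hπT : ∀ x, π (T x) = π x + (q.num : ZMod b) := by
    intro x
    have e1 : ζ ^ ((w (T x)) : ℤ) = ζ ^ (q.num + (w x : ℤ)) := by
      rw [zpow_add₀ hζne]
      rw [zpow_natCast, zpow_natCast]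
      rw [hweq (T x), hweq x, hf x, ← hlamζ]
      ring
    have e2 := hzinj _ _ e1
    push_cast at e2
    show ((w (T x) : ℕ) : ZMod b) = ((w x : ℕ) : ZMod b) + (q.num : ZMod b)
    rw [e2]
    ring
  have hπlc : IsLocallyConstant π := by
    have hfib : ∀ t : ZMod b, π ⁻¹' {t} = (fun x => f x / f x₀) ⁻¹' {ζ ^ (t.val)} := by
      intro t
      ext x
      simp only [Set.mem_preimage, Set.mem_singleton_iff]
      constructor
      · intro hx
        rw [← hweq x, ← zpow_natCast ζ (w x), ← zpow_natCast ζ t.val]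
        apply hzred
        push_cast
        rw [show ((t.val : ℕ) : ZMod b) = t from ZMod.natCast_rightInverse t]
        exact hx
      · intro hx
        have e3 : ζ ^ ((w x : ℕ) : ℤ) = ζ ^ ((t.val : ℕ) : ℤ) := by
          rw [zpow_natCast, zpow_natCast, hweq x, hx]
        have e4 := hzinj _ _ e3
        push_cast at e4
        show ((w x : ℕ) : ZMod b) = t
        rw [e4, ZMod.natCast_rightInverse t]
    have hclosed : ∀ t : ZMod b, IsClosed (π ⁻¹' {t}) := by
      intro t
      rw [hfib t]
      exact isClosed_singleton.preimage (f.continuous.div_const _)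
    rw [IsLocallyConstant.iff_isOpen_fiber]
    intro t
    have hopen : π ⁻¹' {t} = (⋃ t' ∈ Finset.univ.erase t, π ⁻¹' {t'})ᶜ := by
      ext x
      simp only [Set.mem_compl_iff, Set.mem_iUnion, Set.mem_preimage, Set.mem_singleton_iff,
        exists_prop]
      constructor
      · intro hx
        rintro ⟨t', ht', hxt'⟩
        exact (Finset.mem_erase.1 ht').1 (by rw [← hx, ← hxt'])
      · intro hx
        by_contra hne
        exact hx ⟨π x, Finset.mem_erase.2 ⟨hne, Finset.mem_univ _⟩, rfl⟩
    rw [hopen]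
    exact (isClosed_biUnion_finset (fun t' _ => hclosed t')).isOpen_compl
  -- transfer to Y via the GPS lemma
  set R : Y ≃ₜ Y := (φ.symm.trans T).trans φ with hRdef
  have hRy : ∀ y, R y = sp S (n (φ.symm y)) y := by
    intro y
    show φ (T (φ.symm y)) = sp S (n (φ.symm y)) y
    rw [h1 (φ.symm y), φ.apply_symm_apply]
    rfl
  have hcont2 : ∀ y : Y, y ≠ φ pn → ContinuousAt (fun y => n (φ.symm y)) y := by
    intro y hy
    have h3 : φ.symm y ≠ pn := fun he => hy (by rw [← he, φ.apply_symm_apply])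
    exact (hn _ h3).comp φ.symm.continuous.continuousAt
  set τ : Y → ZMod b := fun y => π (φ.symm y) with hτdef
  have hτlc : IsLocallyConstant τ := hπlc.comp_continuous φ.symm.continuous
  have hkey : ∀ y, τ (R y) - τ y = (q.num : ZMod b) := by
    intro y
    have hsymmR : φ.symm (R y) = T (φ.symm y) := by
      show φ.symm (φ (T (φ.symm y))) = T (φ.symm y)
      rw [φ.symm_apply_apply]
    show π (φ.symm (R y)) - π (φ.symm y) = (q.num : ZMod b)
    rw [hsymmR, hπT (φ.symm y)]
    ring
  obtain ⟨σ, hσlc, hσ⟩ :=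
    (cob_comp_R (b := b) hRy hcont2 hτlc).congr (fun y => hkey y)
  -- build the eigenfunction on Y
  set gf : Y → ℂ := fun y => ζ ^ ((σ y).val) with hgf
  have hglc : IsLocallyConstant gf := hσlc.comp (fun t => ζ ^ t.val)
  refine ⟨ContinuousMap.mk gf hglc.continuous, ?_, ?_⟩
  · intro hg0
    have hval := ContinuousMap.congr_fun hg0 (φ x₀)
    simp only [ContinuousMap.coe_mk, ContinuousMap.zero_apply] at hval
    exact pow_ne_zero _ hζne hval
  · intro y
    show gf (S y) = lam * gf y
    have h5 : σ (S y) = (q.num : ZMod b) + σ y := eq_add_of_sub_eq (hσ y)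
    have e2 : ζ ^ (((σ (S y)).val : ℕ) : ℤ) = ζ ^ (q.num + ((σ y).val : ℤ)) := by
      apply hzred
      push_cast
      rw [ZMod.natCast_rightInverse (σ (S y)), ZMod.natCast_rightInverse (σ y)]
      exact h5
    show ζ ^ ((σ (S y)).val) = lam * ζ ^ ((σ y).val)
    rw [← zpow_natCast ζ ((σ (S y)).val), e2, zpow_add₀ hζne, zpow_natCast, hlamζ]

end Transfer

end

end Stmt6

/-- Strongly orbit equivalent minimal Cantor systems have the same rational
additive continuous eigenvalues: if `φ : X → Y` is a homeomorphism sending orbits to orbits,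
with orbit cocycles `n, m : X → ℤ` each continuous except at most at one point, then
`E(X,T) ∩ ℚ = E(Y,S) ∩ ℚ`. -/
theorem stmt6 {X Y : Type*} [TopologicalSpace X] [CompactSpace X]
    [TopologicalSpace.MetrizableSpace X] [TotallyDisconnectedSpace X] [Nonempty X]
    [TopologicalSpace Y] [CompactSpace Y]
    [TopologicalSpace.MetrizableSpace Y] [TotallyDisconnectedSpace Y] [Nonempty Y]
    (hniX : ∀ x : X, ¬IsOpen ({x} : Set X))
    (hniY : ∀ y : Y, ¬IsOpen ({y} : Set Y))
    (T : X ≃ₜ X) (S : Y ≃ₜ Y)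
    (hminT : ∀ x : X, Dense (Set.range fun k : ℤ => (T.toEquiv ^ k) x))
    (hminS : ∀ y : Y, Dense (Set.range fun k : ℤ => (S.toEquiv ^ k) y))
    (φ : X ≃ₜ Y) (n m : X → ℤ)
    (pn : X) (hn : ∀ x : X, x ≠ pn → ContinuousAt n x)
    (pm : X) (hm : ∀ x : X, x ≠ pm → ContinuousAt m x)
    (h1 : ∀ x : X, φ (T x) = (S.toEquiv ^ n x) (φ x))
    (h2 : ∀ x : X, φ ((T.toEquiv ^ m x) x) = S (φ x)) :
    ∀ q : ℚ,
      (∃ f : C(X, ℂ), f ≠ 0 ∧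
        ∀ x : X, f (T x) = Complex.exp (2 * Real.pi * Complex.I * (q : ℝ)) * f x) ↔
      (∃ g : C(Y, ℂ), g ≠ 0 ∧
        ∀ y : Y, g (S y) = Complex.exp (2 * Real.pi * Complex.I * (q : ℝ)) * g y) := by
  intro q
  constructor
  · exact Stmt6.transfer T S hminT φ n pn hn h1 q
  · refine Stmt6.transfer S T hminS φ.symm (fun y => m (φ.symm y)) (φ pm) ?_ ?_ q
    · intro y hy
      have h3 : φ.symm y ≠ pm := fun he => hy (by rw [← he, φ.apply_symm_apply])
      exact (hm _ h3).comp φ.symm.continuous.continuousAt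
    · intro y
      have h4 := h2 (φ.symm y)
      rw [φ.apply_symm_apply] at h4
      rw [← h4, φ.symm_apply_apply]
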